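/- arXiv:1405.7746 — 5 statements merged into one kernel-verified Lean document; each statement's English description precedes it below -/
import Mathlib

section
/- Let g(z; λ, α) = α λ^{-α} z^{α-1} exp(-(z/λ)^α) be the Weibull density with parameters λ > 0, α > 0. Then for all y > 0, λ > 0, α > 0, θ ∈ (-s, s) with θ ≠ 0 and C(θ) ≠ 0, the EWPS density satisfies f(y; λ, α, θ) = Σ_{n=1}^∞ (a_n θ^n / C(θ)) · g(y; λ n^{-1/α}, α). -/
/-- Weibull density with scale `lam` and shape `α`. -/
noncomputable def weibullPdf (z lam α : ℝ) : ℝ :=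
  α * lam ^ (-α) * z ^ (α - 1) * Real.exp (-(z / lam) ^ α)

/-- the EWPS density is an infinite linear combination of Weibull
densities: f(y;λ,α,θ) = Σ_{n≥1} (a_n θ^n / C(θ)) g(y; λ n^{-1/α}, α). -/
theorem stmt_3 (a : ℕ → ℝ) (s : ℝ) (hs : 0 < s)
    (ha : ∀ n, 1 ≤ n → 0 ≤ a n) (ha1 : 0 < a 1)
    (hsum : ∀ x : ℝ, |x| < s → Summable (fun n : ℕ => a (n+1) * x ^ (n+1)))
    (hsum' : ∀ x : ℝ, |x| < s → Summable (fun n : ℕ => ((n : ℝ)+1) * a (n+1) * x ^ n)) :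
    ∀ y lam α θ : ℝ, 0 < y → 0 < lam → 0 < α → |θ| < s → θ ≠ 0 →
      (∑' n : ℕ, a (n+1) * θ ^ (n+1)) ≠ 0 →
      θ * weibullPdf y lam α / (∑' n : ℕ, a (n+1) * θ ^ (n+1)) *
          (∑' n : ℕ, ((n : ℝ)+1) * a (n+1) * (θ * Real.exp (-(y / lam) ^ α)) ^ n) =
        ∑' n : ℕ, (a (n+1) * θ ^ (n+1) / (∑' k : ℕ, a (k+1) * θ ^ (k+1))) *
          weibullPdf y (lam * ((n : ℝ)+1) ^ (-(1 / α))) α := by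
  intro y lam α θ hy hlam hα hθs hθ hC
  rw [← tsum_mul_left]
  refine tsum_congr fun n => ?_
  have hm : (0:ℝ) < (n:ℝ) + 1 := by positivity
  set m : ℝ := (n:ℝ) + 1 with hmdef
  set c : ℝ := m ^ (-(1/α)) with hcdef
  have hc : 0 < c := Real.rpow_pos_of_pos hm _
  set E : ℝ := (y / lam) ^ α with hEdef
  -- (lam * c) ^ (-α) = lam ^ (-α) * m
  have hca : c ^ (-α) = m := by
    rw [hcdef, ← Real.rpow_mul hm.le,
      show -(1/α) * -α = 1 by field_simp, Real.rpow_one]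
  have h1 : (lam * c) ^ (-α) = lam ^ (-α) * m := by
    rw [Real.mul_rpow hlam.le hc.le, hca]
  -- (y / (lam * c)) ^ α = E * m
  have hca2 : (c⁻¹) ^ α = m := by
    have hci : c⁻¹ = m ^ (1/α) := by
      rw [hcdef, ← Real.rpow_neg hm.le, neg_neg]
    rw [hci, ← Real.rpow_mul hm.le, show 1/α * α = 1 by field_simp, Real.rpow_one]
  have h2 : (y / (lam * c)) ^ α = E * m := by
    have : y / (lam * c) = (y / lam) * c⁻¹ := by field_simp
    rw [this, Real.mul_rpow (by positivity) (by positivity), hca2]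
  have hexp : Real.exp (-(E * m)) = Real.exp (-E) * Real.exp (-E) ^ n := by
    rw [← Real.exp_nat_mul, ← Real.exp_add]
    congr 1
    push_cast [hmdef]
    ring
  have hW : weibullPdf y (lam * c) α
      = m * (α * lam ^ (-α) * y ^ (α - 1) * Real.exp (-E)) * Real.exp (-E) ^ n := by
    rw [weibullPdf, h1, h2, hexp]; ring
  rw [hW, weibullPdf]
  rw [mul_pow, pow_succ]
  ring
end

section
/- Let Y have density f(y; λ, α, θ) = (θ g(y; λ, α)/C(θ)) C'(θ e^{-(y/λ)^α}) on (0, ∞) with λ, α > 0, θ ∈ (-s, s), θ ≠ 0, C(θ) ≠ 0. Then for every r > 0, E(Y^r) = Γ(r/α + 1) λ^r · (1/C(θ)) · Σ_{n=1}^∞ a_n θ^n n^{-r/α}, and this series converges absolutely. -/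
/-- EWPS density. -/
noncomputable def ewpsPdf (a : ℕ → ℝ) (y lam α θ : ℝ) : ℝ :=
  θ * weibullPdf y lam α / (∑' n : ℕ, a (n+1) * θ ^ (n+1)) *
    (∑' n : ℕ, ((n : ℝ)+1) * a (n+1) * (θ * Real.exp (-(y / lam) ^ α)) ^ n)

open Real Set MeasureTheory

lemma myIntegrableOn {p q b : ℝ} (hp : 0 < p) (hq : -1 < q) (hb : 0 < b) :
    IntegrableOn (fun x : ℝ => x ^ q * Real.exp (-b * x ^ p)) (Ioi 0) := by
  have h1 : IntegrableOn (fun y : ℝ => y ^ ((q+1)/p - 1) * Real.exp (-y)) (Ioi 0) := by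
    have := Real.GammaIntegral_convergent (div_pos (by linarith : (0:ℝ) < q + 1) hp)
    simpa [mul_comm] using this
  have h2 : IntegrableOn (fun y : ℝ => (b*y) ^ ((q+1)/p - 1) * Real.exp (-(b*y))) (Ioi 0) := by
    have h := (integrableOn_Ioi_comp_mul_left_iff
      (fun y : ℝ => y ^ ((q+1)/p - 1) * Real.exp (-y)) 0 hb).2 (by simpa using h1)
    simpa using h
  have h3 := (integrableOn_Ioi_comp_rpow_iff'
      (fun y : ℝ => (b*y) ^ ((q+1)/p - 1) * Real.exp (-(b*y))) hp.ne').2 h2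
  have h4 := h3.const_mul ((b : ℝ) ^ ((q+1)/p - 1))⁻¹
  refine MeasureTheory.IntegrableOn.congr_fun h4 (fun x hx => ?_) measurableSet_Ioi
  have hx0 : (0:ℝ) < x := hx
  have hbp : (0:ℝ) < b ^ ((q+1)/p - 1) := Real.rpow_pos_of_pos hb _
  have e1 : (b * x ^ p) ^ ((q+1)/p - 1) = b ^ ((q+1)/p - 1) * x ^ (q + 1 - p) := by
    rw [Real.mul_rpow hb.le (Real.rpow_nonneg hx0.le _), ← Real.rpow_mul hx0.le]
    congr 1
    field_simp
  have e2 : x ^ (p - 1) * x ^ (q + 1 - p) = x ^ q := by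
    rw [← Real.rpow_add hx0]; congr 1; ring
  simp only [smul_eq_mul, e1]
  field_simp
  rw [← e2]

lemma myAux {α lam r : ℝ} (hlam : 0 < lam) (hα : 0 < α) (t c : ℝ) (n : ℕ) :
    (((n:ℝ)+1) * t / c * (α * lam ^ (-α))) *
      ((((n:ℝ)+1) * lam ^ (-α)) ^ (-(r + α - 1 + 1) / α) * (1/α) * Real.Gamma (r/α+1))
    = Real.Gamma (r/α+1) * lam ^ r * (1/c) * (t * ((n:ℝ)+1) ^ (-(r/α))) := by
  have hn : (0:ℝ) < (n:ℝ)+1 := by positivity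
  have hl : (0:ℝ) < lam ^ (-α) := Real.rpow_pos_of_pos hlam _
  have e0 : -(r + α - 1 + 1) / α = -(r/α + 1) := by field_simp; ring
  rw [e0, Real.mul_rpow hn.le hl.le]
  have e3 : (lam ^ (-α)) ^ (-(r/α+1)) = lam ^ (α * (r/α+1)) := by
    rw [← Real.rpow_mul hlam.le]; congr 1; ring
  have e4 : α * (r/α + 1) = r + α := by field_simp
  rw [e3, e4]
  have e5 : lam ^ (-α) * lam ^ (r + α) = lam ^ r := by
    rw [← Real.rpow_add hlam]; congr 1; ring
  have e2 : ((n:ℝ)+1) * ((n:ℝ)+1) ^ (-(r/α+1)) = ((n:ℝ)+1) ^ (-(r/α)) := by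
    nth_rewrite 1 [← Real.rpow_one ((n:ℝ)+1)]
    rw [← Real.rpow_add hn]; congr 1; ring
  calc (((n:ℝ)+1) * t / c * (α * lam ^ (-α))) *
      (((n:ℝ)+1) ^ (-(r/α+1)) * lam ^ (r+α) * (1/α) * Real.Gamma (r/α+1))
      = (α * (1/α)) * (lam ^ (-α) * lam ^ (r+α)) *
        ((((n:ℝ)+1) * ((n:ℝ)+1) ^ (-(r/α+1)))) * (t / c) * Real.Gamma (r/α+1) := by ring
    _ = Real.Gamma (r/α+1) * lam ^ r * (1/c) * (t * ((n:ℝ)+1) ^ (-(r/α))) := by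
        rw [e5, e2, mul_one_div, div_self hα.ne']; ring

/-- the r-th moment of an EWPS random variable is
Γ(r/α+1) λ^r C(θ)⁻¹ Σ_{n≥1} a_n θ^n n^{-r/α}, and the series converges absolutely. -/
theorem stmt_4 (a : ℕ → ℝ) (s : ℝ) (hs : 0 < s)
    (ha : ∀ n, 1 ≤ n → 0 ≤ a n) (ha1 : 0 < a 1)
    (hsum : ∀ x : ℝ, |x| < s → Summable (fun n : ℕ => a (n+1) * x ^ (n+1)))
    (lam α θ r : ℝ) (hlam : 0 < lam) (hα : 0 < α) (hθs : |θ| < s) (hθ : θ ≠ 0)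
    (hC : (∑' n : ℕ, a (n+1) * θ ^ (n+1)) ≠ 0) (hr : 0 < r) :
    (∫ y in Set.Ioi (0 : ℝ), y ^ r * ewpsPdf a y lam α θ) =
        Real.Gamma (r / α + 1) * lam ^ r * (1 / ∑' n : ℕ, a (n+1) * θ ^ (n+1)) *
          ∑' n : ℕ, a (n+1) * θ ^ (n+1) * ((n : ℝ)+1) ^ (-(r / α)) ∧
      Summable (fun n : ℕ => |a (n+1) * θ ^ (n+1) * ((n : ℝ)+1) ^ (-(r / α))|) := by
  have hq : (-1:ℝ) < r + α - 1 := by linarith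
  have hl : (0:ℝ) < lam ^ (-α) := Real.rpow_pos_of_pos hlam _
  have hsumθabs : Summable (fun n : ℕ => a (n+1) * |θ| ^ (n+1)) :=
    hsum |θ| (by rwa [abs_abs])
  have hbn : ∀ n : ℕ, (0:ℝ) < ((n:ℝ)+1) * lam ^ (-α) := fun n => by positivity
  have hGam : (r + α - 1 + 1) / α = r / α + 1 := by field_simp; ring
  set C := (∑' n : ℕ, a (n+1) * θ ^ (n+1)) with hCdef
  set F : ℕ → ℝ → ℝ := fun n y =>
    (((n:ℝ)+1) * (a (n+1) * θ^(n+1)) / C * (α * lam ^ (-α))) *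
      (y ^ (r + α - 1) * Real.exp (-(((n:ℝ)+1) * lam ^ (-α)) * y ^ α)) with hFdef
  -- pointwise identity
  have hpt : ∀ y ∈ Ioi (0:ℝ), y ^ r * ewpsPdf a y lam α θ = ∑' n : ℕ, F n y := by
    intro y hy
    have hy : (0:ℝ) < y := hy
    have hdiv : (y / lam) ^ α = y ^ α * lam ^ (-α) := by
      rw [Real.div_rpow hy.le hlam.le, Real.rpow_neg hlam.le, div_eq_mul_inv]
    have step1 : y ^ r * ewpsPdf a y lam α θ =
        ∑' n : ℕ, (y ^ r * (θ * weibullPdf y lam α / C)) *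
          (((n:ℝ)+1) * a (n+1) * (θ * Real.exp (-(y / lam) ^ α)) ^ n) := by
      rw [ewpsPdf, ← hCdef, tsum_mul_left]; ring
    rw [step1]
    refine tsum_congr fun n => ?_
    have hexp : Real.exp (-(((n:ℝ)+1) * lam ^ (-α)) * y ^ α)
        = Real.exp (-(y / lam) ^ α) ^ (n+1) := by
      rw [← Real.exp_nat_mul]
      congr 1
      push_cast
      rw [hdiv]; ring
    have hyr : y ^ (r + α - 1) = y ^ r * y ^ (α - 1) := by
      rw [← Real.rpow_add hy]; congr 1; ring
    rw [hFdef]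
    simp only
    rw [hexp, hyr, weibullPdf, mul_pow, pow_succ θ n, pow_succ (Real.exp (-(y / lam) ^ α)) n]
    ring
  -- integrability
  have hInt : ∀ n : ℕ, Integrable (F n) (volume.restrict (Ioi 0)) := fun n =>
    (myIntegrableOn hα hq (hbn n)).const_mul _
  -- value of each integral
  have hW : ∀ n : ℕ, (∫ y in Ioi (0:ℝ),
      y ^ (r + α - 1) * Real.exp (-(((n:ℝ)+1) * lam ^ (-α)) * y ^ α))
      = (((n:ℝ)+1) * lam ^ (-α)) ^ (-(r + α - 1 + 1) / α) * (1/α) * Real.Gamma (r/α+1) := by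
    intro n
    rw [integral_rpow_mul_exp_neg_mul_rpow hα hq (hbn n), hGam]
  have hIntF : ∀ n : ℕ, (∫ y in Ioi (0:ℝ), F n y)
      = Real.Gamma (r/α+1) * lam ^ r * (1/C) *
        ((a (n+1) * θ^(n+1)) * ((n:ℝ)+1) ^ (-(r/α))) := by
    intro n
    rw [hFdef]
    simp only
    rw [MeasureTheory.integral_const_mul, hW n, myAux hlam hα]
  -- norm integrals
  have hNormInt : ∀ n : ℕ, (∫ y in Ioi (0:ℝ), ‖F n y‖)
      = Real.Gamma (r/α+1) * lam ^ r * (1/|C|) *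
        ((a (n+1) * |θ|^(n+1)) * ((n:ℝ)+1) ^ (-(r/α))) := by
    intro n
    have hk : |(((n:ℝ)+1) * (a (n+1) * θ^(n+1)) / C * (α * lam ^ (-α)))|
        = (((n:ℝ)+1) * (a (n+1) * |θ|^(n+1)) / |C| * (α * lam ^ (-α))) := by
      rw [abs_mul, abs_div, abs_mul, abs_mul, abs_pow,
        abs_of_nonneg (ha (n+1) (by omega)),
        abs_of_pos (by positivity : (0:ℝ) < (n:ℝ)+1),
        abs_of_pos (mul_pos hα hl)]
    have hcong : ∀ y ∈ Ioi (0:ℝ), ‖F n y‖ =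
        (((n:ℝ)+1) * (a (n+1) * |θ|^(n+1)) / |C| * (α * lam ^ (-α))) *
          (y ^ (r + α - 1) * Real.exp (-(((n:ℝ)+1) * lam ^ (-α)) * y ^ α)) := by
      intro y hy
      have hy : (0:ℝ) < y := hy
      rw [hFdef]
      simp only
      rw [Real.norm_eq_abs, abs_mul, hk,
        abs_of_nonneg (by positivity : (0:ℝ) ≤ y ^ (r + α - 1) *
          Real.exp (-(((n:ℝ)+1) * lam ^ (-α)) * y ^ α))]
    rw [setIntegral_congr_fun measurableSet_Ioi hcong, MeasureTheory.integral_const_mul,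
      hW n, myAux hlam hα]
  -- summability of the abs series
  have hsum2 : Summable (fun n : ℕ => a (n+1) * |θ|^(n+1) * ((n:ℝ)+1) ^ (-(r/α))) := by
    refine Summable.of_nonneg_of_le (fun n => ?_) (fun n => ?_) hsumθabs
    · exact mul_nonneg (mul_nonneg (ha (n+1) (by omega)) (pow_nonneg (abs_nonneg θ) _))
        (Real.rpow_nonneg (by positivity) _)
    · refine mul_le_of_le_one_right
        (mul_nonneg (ha (n+1) (by omega)) (pow_nonneg (abs_nonneg θ) _)) ?_
      refine Real.rpow_le_one_of_one_le_of_nonpos (by simp) ?_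
      rw [neg_nonpos]
      positivity
  have hNormSum : Summable (fun n : ℕ => ∫ y in Ioi (0:ℝ), ‖F n y‖) := by
    refine (hsum2.mul_left (Real.Gamma (r/α+1) * lam ^ r * (1/|C|))).congr fun n => ?_
    rw [hNormInt n]
  constructor
  · rw [setIntegral_congr_fun measurableSet_Ioi hpt,
      ← MeasureTheory.integral_tsum_of_summable_integral_norm hInt hNormSum]
    rw [tsum_congr hIntF, tsum_mul_left]
  · refine hsum2.congr fun n => ?_
    rw [abs_mul, abs_mul, abs_pow, abs_of_nonneg (ha (n+1) (by omega)),
      abs_of_nonneg (Real.rpow_nonneg (by positivity) _)]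
end

section
/- Suppose the Weibull family is identifiable: if g(y; λ₁, α₁) = g(y; λ₂, α₂) for all y > 0, then λ₁ = λ₂ and α₁ = α₂. Let K = {n ∈ ℕ : a_n > 0}. If K contains both an even and an odd integer, then F(·; λ₁, α₁, θ₁) = F(·; λ₂, α₂, θ₂) (as functions on (0, ∞)) implies (λ₁, α₁, θ₁) = (λ₂, α₂, θ₂). In particular the EWPS family is identifiable whenever C is not an odd function. -/
open Filter Real
set_option maxHeartbeats 1000000


section Vanish
variable (d : ℕ → ℝ)

lemma term_abs_le (t : ℝ) (ht : 0 < t) (ht1 : t ≤ 1) (e : ℕ → ℝ) (k : ℕ) :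
    |e k * t ^ k| ≤ |e k| := by
  rw [abs_mul, abs_pow]
  calc |e k| * |t| ^ k ≤ |e k| * 1 :=
        mul_le_mul_of_nonneg_left
          (pow_le_one₀ (abs_nonneg t) (by rw [abs_of_pos ht]; linarith)) (abs_nonneg _)
    _ = |e k| := mul_one _

lemma vanish_split (hd : Summable (fun k => |d k|)) (t : ℝ) (ht : 0 < t) (ht1 : t < 1) :
    (∑' k, d k * t ^ k) = d 0 + t * ∑' k, d (k+1) * t ^ k := by
  have habs : Summable (fun k => |d k * t ^ k|) :=
    hd.of_nonneg_of_le (fun k => abs_nonneg _) (term_abs_le t ht ht1.le d)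
  have hs : Summable (fun k => d k * t ^ k) := summable_abs_iff.mp habs
  rw [Summable.tsum_eq_zero_add hs, ← tsum_mul_left]
  simp only [pow_zero, mul_one]
  congr 1
  exact tsum_congr (fun k => by ring)

lemma vanish_zero (hd : Summable (fun k => |d k|))
    (h : ∀ t : ℝ, 0 < t → t < 1 → (∑' k, d k * t ^ k) = 0) : d 0 = 0 := by
  have hd1 : Summable (fun k => |d (k+1)|) := (summable_nat_add_iff 1).mpr hd
  set M : ℝ := ∑' k, |d (k+1)| with hM
  have hM0 : 0 ≤ M := tsum_nonneg (fun k => abs_nonneg _)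
  have key : ∀ t : ℝ, 0 < t → t < 1 → |d 0| ≤ t * M := by
    intro t ht ht1
    have habs' : Summable (fun k => |d (k+1) * t ^ k|) :=
      hd1.of_nonneg_of_le (fun k => abs_nonneg _) (term_abs_le t ht ht1.le _)
    have hnorm : Summable (fun k => ‖d (k+1) * t ^ k‖) := by
      simpa only [Real.norm_eq_abs] using habs'
    have hbound : |∑' k, d (k+1) * t ^ k| ≤ M := by
      have h1 := norm_tsum_le_tsum_norm hnorm
      simp only [Real.norm_eq_abs] at h1
      refine h1.trans (Summable.tsum_le_tsum (term_abs_le t ht ht1.le _) habs' hd1)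
    have hsplit := vanish_split d hd t ht ht1
    rw [h t ht ht1] at hsplit
    have : d 0 = -(t * ∑' k, d (k+1) * t ^ k) := by linarith
    rw [this, abs_neg, abs_mul, abs_of_pos ht]
    exact mul_le_mul_of_nonneg_left hbound ht.le
  by_contra hne
  have h0 : 0 < |d 0| := abs_pos.mpr hne
  set t := min (1/2) (|d 0| / (2 * (M + 1))) with htdef
  have ht : 0 < t := lt_min (by norm_num) (by positivity)
  have ht1 : t < 1 := lt_of_le_of_lt (min_le_left _ _) (by norm_num)
  have hle := key t ht ht1
  have h2 : t * M ≤ (|d 0| / (2 * (M + 1))) * (M + 1) :=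
    mul_le_mul (min_le_right _ _) (by linarith) hM0 (by positivity)
  have heq : (|d 0| / (2 * (M + 1))) * (M + 1) = |d 0| / 2 := by
    field_simp
  rw [heq] at h2
  linarith

lemma tsum_vanish : ∀ (n : ℕ) (d : ℕ → ℝ), Summable (fun k => |d k|) →
    (∀ t : ℝ, 0 < t → t < 1 → (∑' k, d k * t ^ k) = 0) → d n = 0 := by
  intro n
  induction n with
  | zero => intro d hd h; exact vanish_zero d hd h
  | succ n ih =>
    intro d hd h
    have hd1 : Summable (fun k => |d (k+1)|) := (summable_nat_add_iff 1).mpr hd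
    refine ih (fun k => d (k+1)) hd1 (fun t ht ht1 => ?_)
    have hd0 : d 0 = 0 := vanish_zero d hd h
    have hsplit := vanish_split d hd t ht ht1
    rw [h t ht ht1, hd0, zero_add] at hsplit
    have := (mul_eq_zero.mp hsplit.symm).resolve_left (ne_of_gt ht)
    exact this

end Vanish

lemma growth_aux (c₁ c₂ β₁ β₂ : ℝ) (hc₁ : 0 < c₁) (hc₂ : 0 < c₂) (hβ₁ : 0 < β₁) (hβ₂ : 0 < β₂)
    (hcase : β₁ < β₂ ∨ (β₁ = β₂ ∧ c₁ < c₂)) :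
    Tendsto (fun y : ℝ => c₂ * y ^ β₂ - c₁ * y ^ β₁) atTop atTop := by
  rcases hcase with hlt | ⟨heq, hclt⟩
  · have hδ : 0 < β₂ - β₁ := by linarith
    have h1 : Tendsto (fun y : ℝ => y ^ β₁ * (c₂ * y ^ (β₂ - β₁) - c₁)) atTop atTop := by
      refine (tendsto_rpow_atTop hβ₁).atTop_mul_atTop₀ ?_
      have := (tendsto_rpow_atTop hδ).const_mul_atTop hc₂
      simpa [sub_eq_add_neg] using tendsto_atTop_add_const_right atTop (-c₁) this
    refine h1.congr' ?_
    filter_upwards [eventually_gt_atTop 0] with y hy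
    rw [mul_sub, ← mul_assoc, mul_comm (y ^ β₁) c₂, mul_assoc, ← Real.rpow_add hy]
    ring_nf
  · subst heq
    have h1 : Tendsto (fun y : ℝ => (c₂ - c₁) * y ^ β₁) atTop atTop :=
      (tendsto_rpow_atTop hβ₁).const_mul_atTop (by linarith)
    exact h1.congr (fun y => by ring)

lemma growth (c₁ c₂ β₁ β₂ L : ℝ) (hc₁ : 0 < c₁) (hc₂ : 0 < c₂) (hβ₁ : 0 < β₁) (hβ₂ : 0 < β₂)
    (h : ∀ᶠ y in atTop, |c₂ * y ^ β₂ - c₁ * y ^ β₁| ≤ L) : β₁ = β₂ ∧ c₁ = c₂ := by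
  have contra : ∀ c₁' c₂' β₁' β₂' : ℝ, 0 < c₁' → 0 < c₂' → 0 < β₁' → 0 < β₂' →
      (β₁' < β₂' ∨ (β₁' = β₂' ∧ c₁' < c₂')) →
      (∀ᶠ y in atTop, |c₂' * y ^ β₂' - c₁' * y ^ β₁'| ≤ L) → False := by
    intro c₁' c₂' β₁' β₂' h1 h2 h3 h4 hcase hb
    have ht := growth_aux c₁' c₂' β₁' β₂' h1 h2 h3 h4 hcase
    obtain ⟨y, hy1, hy2⟩ := ((ht.eventually_gt_atTop L).and hb).exists
    have := le_abs_self (c₂' * y ^ β₂' - c₁' * y ^ β₁')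
    linarith
  have hswap : ∀ᶠ y in atTop, |c₁ * y ^ β₁ - c₂ * y ^ β₂| ≤ L := by
    filter_upwards [h] with y hy; rwa [abs_sub_comm]
  rcases lt_trichotomy β₁ β₂ with hβ | hβ | hβ
  · exact absurd (contra c₁ c₂ β₁ β₂ hc₁ hc₂ hβ₁ hβ₂ (Or.inl hβ) h) (by simp)
  · refine ⟨hβ, ?_⟩
    rcases lt_trichotomy c₁ c₂ with hc | hc | hc
    · exact absurd (contra c₁ c₂ β₁ β₂ hc₁ hc₂ hβ₁ hβ₂ (Or.inr ⟨hβ, hc⟩) h) (by simp)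
    · exact hc
    · exact absurd (contra c₂ c₁ β₂ β₁ hc₂ hc₁ hβ₂ hβ₁ (Or.inr ⟨hβ.symm, hc⟩) hswap) (by simp)
  · exact absurd (contra c₂ c₁ β₂ β₁ hc₂ hc₁ hβ₂ hβ₁ (Or.inl hβ) hswap) (by simp)

section Approx
variable (a : ℕ → ℝ) (s : ℝ) (hs : 0 < s)
  (ha : ∀ n, 1 ≤ n → 0 ≤ a n)
  (hsum : ∀ x : ℝ, |x| < s → Summable (fun n : ℕ => a (n+1) * x ^ (n+1)))

include ha hsum in
lemma abs_summable' (θ : ℝ) (hθs : |θ| < s) :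
    Summable (fun n : ℕ => a (n+1) * |θ| ^ (n+1)) := by
  have := hsum |θ| (by rwa [abs_abs])
  simpa using this

include ha hsum in
lemma S_approx' (θ : ℝ) (hθs : |θ| < s) (t : ℝ) (ht : 0 < t) (ht1 : t ≤ 1) :
    |(∑' n : ℕ, a (n+1) * (θ * t) ^ (n+1)) - a 1 * θ * t|
      ≤ (∑' n : ℕ, a (n+2) * |θ| ^ (n+2)) * t ^ 2 := by
  have hb := abs_summable' a s ha hsum θ hθs
  have habs : Summable (fun n : ℕ => |a (n+1) * θ ^ (n+1) * t ^ (n+1)|) := by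
    refine hb.of_nonneg_of_le (fun n => abs_nonneg _) (fun n => ?_)
    rw [abs_mul, abs_mul, abs_pow, abs_pow, abs_of_nonneg (ha (n+1) (by omega))]
    calc a (n+1) * |θ| ^ (n+1) * |t| ^ (n+1) ≤ a (n+1) * |θ| ^ (n+1) * 1 := by
          refine mul_le_mul_of_nonneg_left ?_ (mul_nonneg (ha _ (by omega)) (by positivity))
          exact pow_le_one₀ (abs_nonneg t) (by rw [abs_of_pos ht]; linarith)
      _ = a (n+1) * |θ| ^ (n+1) := mul_one _
  have hsummable : Summable (fun n : ℕ => a (n+1) * θ ^ (n+1) * t ^ (n+1)) :=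
    summable_abs_iff.mp habs
  have hrw : (∑' n : ℕ, a (n+1) * (θ * t) ^ (n+1))
      = ∑' n : ℕ, a (n+1) * θ ^ (n+1) * t ^ (n+1) :=
    tsum_congr (fun n => by rw [mul_pow]; ring)
  have hsplit : (∑' n : ℕ, a (n+1) * θ ^ (n+1) * t ^ (n+1))
      = a 1 * θ * t + t ^ 2 * ∑' n : ℕ, a (n+2) * θ ^ (n+2) * t ^ n := by
    rw [Summable.tsum_eq_zero_add hsummable, ← tsum_mul_left]
    congr 1
    · ring
    · exact tsum_congr (fun n => by ring)
  have hb2 : Summable (fun n : ℕ => a (n+2) * |θ| ^ (n+2)) := by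
    have := (summable_nat_add_iff 1).mpr hb
    simpa using this
  have habs2 : Summable (fun n : ℕ => |a (n+2) * θ ^ (n+2) * t ^ n|) := by
    refine hb2.of_nonneg_of_le (fun n => abs_nonneg _) (fun n => ?_)
    rw [abs_mul, abs_mul, abs_pow, abs_pow, abs_of_nonneg (ha (n+2) (by omega))]
    calc a (n+2) * |θ| ^ (n+2) * |t| ^ n ≤ a (n+2) * |θ| ^ (n+2) * 1 := by
          refine mul_le_mul_of_nonneg_left ?_ (mul_nonneg (ha _ (by omega)) (by positivity))
          exact pow_le_one₀ (abs_nonneg t) (by rw [abs_of_pos ht]; linarith)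
      _ = a (n+2) * |θ| ^ (n+2) := mul_one _
  have hboundtail : |∑' n : ℕ, a (n+2) * θ ^ (n+2) * t ^ n|
      ≤ ∑' n : ℕ, a (n+2) * |θ| ^ (n+2) := by
    have hnorm : Summable (fun n : ℕ => ‖a (n+2) * θ ^ (n+2) * t ^ n‖) := by
      simpa only [Real.norm_eq_abs] using habs2
    have h1 := norm_tsum_le_tsum_norm hnorm
    simp only [Real.norm_eq_abs] at h1
    refine h1.trans (Summable.tsum_le_tsum (fun n => ?_) habs2 hb2)
    rw [abs_mul, abs_mul, abs_pow, abs_pow, abs_of_nonneg (ha (n+2) (by omega))]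
    calc a (n+2) * |θ| ^ (n+2) * |t| ^ n ≤ a (n+2) * |θ| ^ (n+2) * 1 := by
          refine mul_le_mul_of_nonneg_left ?_ (mul_nonneg (ha _ (by omega)) (by positivity))
          exact pow_le_one₀ (abs_nonneg t) (by rw [abs_of_pos ht]; linarith)
      _ = a (n+2) * |θ| ^ (n+2) := mul_one _
  rw [hrw, hsplit]
  rw [add_sub_cancel_left, abs_mul, abs_pow, abs_of_pos ht]
  calc t ^ 2 * |∑' n : ℕ, a (n+2) * θ ^ (n+2) * t ^ n|
      ≤ t ^ 2 * ∑' n : ℕ, a (n+2) * |θ| ^ (n+2) :=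
        mul_le_mul_of_nonneg_left hboundtail (by positivity)
    _ = (∑' n : ℕ, a (n+2) * |θ| ^ (n+2)) * t ^ 2 := by ring

include ha hsum in

lemma ratio_bound (ha1 : 0 < a 1) (θ₁ θ₂ C₁ C₂ : ℝ)
    (hθ₁ : θ₁ ≠ 0) (hθ₁s : |θ₁| < s) (hθ₂s : |θ₂| < s) (hC₂ : C₂ ≠ 0) :
    ∃ δ K : ℝ, 0 < δ ∧ 0 < K ∧ ∀ u v : ℝ, 0 < u → u ≤ δ → 0 < v → v ≤ 1 →
      (∑' n : ℕ, a (n+1) * (θ₁*u)^(n+1)) * C₂ = (∑' n : ℕ, a (n+1) * (θ₂*v)^(n+1)) * C₁ →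
      u ≤ K * v := by
  set M₁ : ℝ := ∑' n : ℕ, a (n+2) * |θ₁| ^ (n+2) with hM₁
  set M₂ : ℝ := ∑' n : ℕ, a (n+2) * |θ₂| ^ (n+2) with hM₂
  have hM₁0 : 0 ≤ M₁ := tsum_nonneg (fun n => mul_nonneg (ha _ (by omega)) (by positivity))
  have hM₂0 : 0 ≤ M₂ := tsum_nonneg (fun n => mul_nonneg (ha _ (by omega)) (by positivity))
  set P : ℝ := |a 1 * θ₁ * C₂| with hP
  have hP0 : 0 < P := by
    rw [hP]
    exact abs_pos.mpr (by positivity)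
  set Q : ℝ := |C₂| * M₁ with hQ
  have hQ0 : 0 ≤ Q := mul_nonneg (abs_nonneg _) hM₁0
  set B : ℝ := |a 1 * θ₂ * C₁| + |C₁| * M₂ + 1 with hB
  have hB0 : 0 < B := by positivity
  refine ⟨min 1 (P / (2 * (Q + 1))), 2 * B / P, lt_min one_pos (by positivity), by positivity,
    fun u v hu hud hv hv1 heq => ?_⟩
  have hu1 : u ≤ 1 := hud.trans (min_le_left _ _)
  have hudP : u ≤ P / (2 * (Q + 1)) := hud.trans (min_le_right _ _)
  have hR₁ := S_approx' a s ha hsum θ₁ hθ₁s u hu hu1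
  have hR₂ := S_approx' a s ha hsum θ₂ hθ₂s v hv hv1
  rw [← hM₁] at hR₁
  rw [← hM₂] at hR₂
  set S₁ : ℝ := ∑' n : ℕ, a (n+1) * (θ₁*u)^(n+1) with hS₁
  set S₂ : ℝ := ∑' n : ℕ, a (n+1) * (θ₂*v)^(n+1) with hS₂
  have key : P * u ≤ |a 1 * θ₂ * C₁| * v + |C₁| * M₂ * v^2 + |C₂| * M₁ * u^2 := by
    have h1 : a 1 * θ₁ * u * C₂
        = a 1 * θ₂ * v * C₁ + (S₂ - a 1 * θ₂ * v) * C₁ - (S₁ - a 1 * θ₁ * u) * C₂ := by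
      linear_combination heq
    have h2 : P * u = |a 1 * θ₁ * u * C₂| := by
      rw [hP, abs_mul, abs_mul (a 1 * θ₁ * u), abs_mul (a 1 * θ₁), abs_of_pos hu]; ring
    rw [h2, h1]
    calc |a 1 * θ₂ * v * C₁ + (S₂ - a 1 * θ₂ * v) * C₁ - (S₁ - a 1 * θ₁ * u) * C₂|
        ≤ |a 1 * θ₂ * v * C₁| + |(S₂ - a 1 * θ₂ * v) * C₁| + |(S₁ - a 1 * θ₁ * u) * C₂| := by
          exact (abs_sub _ _).trans (by gcongr; exact abs_add_le _ _)
      _ ≤ |a 1 * θ₂ * C₁| * v + |C₁| * M₂ * v^2 + |C₂| * M₁ * u^2 := by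
          gcongr ?_ + ?_ + ?_
          · have he : |a 1 * θ₂ * v * C₁| = |a 1 * θ₂ * C₁| * v := by
              rw [abs_mul (a 1 * θ₂ * v), abs_mul (a 1 * θ₂), abs_of_pos hv,
                abs_mul (a 1 * θ₂)]
              ring
            exact le_of_eq he
          · rw [abs_mul]
            calc |S₂ - a 1 * θ₂ * v| * |C₁| ≤ (M₂ * v^2) * |C₁| :=
                  mul_le_mul_of_nonneg_right hR₂ (abs_nonneg _)
              _ = |C₁| * M₂ * v^2 := by ring
          · rw [abs_mul]
            calc |S₁ - a 1 * θ₁ * u| * |C₂| ≤ (M₁ * u^2) * |C₂| :=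
                  mul_le_mul_of_nonneg_right hR₁ (abs_nonneg _)
              _ = |C₂| * M₁ * u^2 := by ring
  have hquad : |C₂| * M₁ * u^2 ≤ (P/2) * u := by
    have h3 : Q * u ≤ P / 2 := by
      have h4 : Q * u ≤ Q * (P / (2 * (Q + 1))) := mul_le_mul_of_nonneg_left hudP hQ0
      refine h4.trans ?_
      rw [← mul_div_assoc, div_le_div_iff₀ (by positivity : (0:ℝ) < 2 * (Q + 1))
        (by norm_num : (0:ℝ) < 2)]
      nlinarith [hP0.le, hQ0]
    calc |C₂| * M₁ * u^2 = (Q * u) * u := by rw [hQ]; ring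
      _ ≤ (P/2) * u := mul_le_mul_of_nonneg_right h3 hu.le
  have hv2 : |C₁| * M₂ * v^2 ≤ |C₁| * M₂ * v := by
    calc |C₁| * M₂ * v^2 = (|C₁| * M₂ * v) * v := by ring
      _ ≤ (|C₁| * M₂ * v) * 1 := by
          refine mul_le_mul_of_nonneg_left hv1 (by positivity)
      _ = |C₁| * M₂ * v := mul_one _
  have hfin : (P/2) * u ≤ B * v := by
    have := key
    rw [hB]
    nlinarith [abs_nonneg (a 1 * θ₂ * C₁), hv.le]
  rw [div_mul_eq_mul_div, le_div_iff₀ hP0]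
  nlinarith [hfin]




end Approx
/-- EWPS cdf F(y;λ,α,θ) = 1 - C(θ e^{-(y/λ)^α})/C(θ). -/
noncomputable def ewpsCdf (a : ℕ → ℝ) (y lam α θ : ℝ) : ℝ :=
  1 - (∑' n : ℕ, a (n+1) * (θ * Real.exp (-(y / lam) ^ α)) ^ (n+1)) /
    (∑' n : ℕ, a (n+1) * θ ^ (n+1))

/-- identifiability of the EWPS family when the Weibull family is
identifiable and K = {n : a_n > 0} contains both an even and an odd integer. -/
theorem stmt_7 (a : ℕ → ℝ) (s : ℝ) (hs : 0 < s)
    (ha : ∀ n, 1 ≤ n → 0 ≤ a n) (ha1 : 0 < a 1)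
    (hsum : ∀ x : ℝ, |x| < s → Summable (fun n : ℕ => a (n+1) * x ^ (n+1)))
    (hWid : ∀ l₁ α₁ l₂ α₂ : ℝ, 0 < l₁ → 0 < α₁ → 0 < l₂ → 0 < α₂ →
      (∀ y : ℝ, 0 < y → weibullPdf y l₁ α₁ = weibullPdf y l₂ α₂) → l₁ = l₂ ∧ α₁ = α₂)
    (hK : ∃ n m : ℕ, 1 ≤ n ∧ 1 ≤ m ∧ 0 < a n ∧ 0 < a m ∧ Even n ∧ Odd m)
    (lam₁ α₁ θ₁ lam₂ α₂ θ₂ : ℝ)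
    (hlam₁ : 0 < lam₁) (hα₁ : 0 < α₁) (hθ₁ : θ₁ ≠ 0) (hθ₁s : |θ₁| < s)
    (hlam₂ : 0 < lam₂) (hα₂ : 0 < α₂) (hθ₂ : θ₂ ≠ 0) (hθ₂s : |θ₂| < s)
    (hC₁ : (∑' n : ℕ, a (n+1) * θ₁ ^ (n+1)) ≠ 0)
    (hC₂ : (∑' n : ℕ, a (n+1) * θ₂ ^ (n+1)) ≠ 0)
    (hF : ∀ y : ℝ, 0 < y → ewpsCdf a y lam₁ α₁ θ₁ = ewpsCdf a y lam₂ α₂ θ₂) :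
    lam₁ = lam₂ ∧ α₁ = α₂ ∧ θ₁ = θ₂ := by
  obtain ⟨n, m, hn1, hm1, han, ham, hnev, hmod⟩ := hK
  set C₁ : ℝ := ∑' n : ℕ, a (n+1) * θ₁ ^ (n+1) with hC₁def
  set C₂ : ℝ := ∑' n : ℕ, a (n+1) * θ₂ ^ (n+1) with hC₂def
  -- Step 1: the key pointwise identity
  have hEq : ∀ y : ℝ, 0 < y →
      (∑' k : ℕ, a (k+1) * (θ₁ * Real.exp (-(y / lam₁) ^ α₁)) ^ (k+1)) * C₂
        = (∑' k : ℕ, a (k+1) * (θ₂ * Real.exp (-(y / lam₂) ^ α₂)) ^ (k+1)) * C₁ := by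
    intro y hy
    have h := hF y hy
    simp only [ewpsCdf, ← hC₁def, ← hC₂def] at h
    have h2 : (∑' k : ℕ, a (k+1) * (θ₁ * Real.exp (-(y / lam₁) ^ α₁)) ^ (k+1)) / C₁
        = (∑' k : ℕ, a (k+1) * (θ₂ * Real.exp (-(y / lam₂) ^ α₂)) ^ (k+1)) / C₂ := by
      linarith
    exact (div_eq_div_iff hC₁ hC₂).mp h2
  -- Step 2: λ and α coincide.
  obtain ⟨δ₁, K₁, hδ₁, hK₁, hrb₁⟩ :=
    ratio_bound a s ha hsum ha1 θ₁ θ₂ C₁ C₂ hθ₁ hθ₁s hθ₂s hC₂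
  obtain ⟨δ₂, K₂, hδ₂, hK₂, hrb₂⟩ :=
    ratio_bound a s ha hsum ha1 θ₂ θ₁ C₂ C₁ hθ₂ hθ₂s hθ₁s hC₁
  have hutend : Tendsto (fun y : ℝ => Real.exp (-((y / lam₁) ^ α₁))) atTop (nhds 0) :=
    Real.tendsto_exp_atBot.comp (tendsto_neg_atTop_atBot.comp
      ((tendsto_rpow_atTop hα₁).comp (tendsto_id.atTop_div_const hlam₁)))
  have hvtend : Tendsto (fun y : ℝ => Real.exp (-((y / lam₂) ^ α₂))) atTop (nhds 0) :=
    Real.tendsto_exp_atBot.comp (tendsto_neg_atTop_atBot.comp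
      ((tendsto_rpow_atTop hα₂).comp (tendsto_id.atTop_div_const hlam₂)))
  set c₁ : ℝ := (lam₁ ^ α₁)⁻¹ with hc₁def
  set c₂ : ℝ := (lam₂ ^ α₂)⁻¹ with hc₂def
  have hc₁0 : 0 < c₁ := inv_pos.mpr (Real.rpow_pos_of_pos hlam₁ _)
  have hc₂0 : 0 < c₂ := inv_pos.mpr (Real.rpow_pos_of_pos hlam₂ _)
  have hbound : ∀ᶠ y in atTop,
      |c₂ * y ^ α₂ - c₁ * y ^ α₁| ≤ max (Real.log K₁) (Real.log K₂) := by
    filter_upwards [hutend.eventually_lt_const (lt_min hδ₁ one_pos),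
      hvtend.eventually_lt_const (lt_min hδ₂ one_pos), eventually_gt_atTop 0]
      with y h1 h2 hy
    set X₁ : ℝ := (y / lam₁) ^ α₁ with hX₁
    set X₂ : ℝ := (y / lam₂) ^ α₂ with hX₂
    have hu0 : 0 < Real.exp (-X₁) := Real.exp_pos _
    have hv0 : 0 < Real.exp (-X₂) := Real.exp_pos _
    have e1 := hrb₁ (Real.exp (-X₁)) (Real.exp (-X₂)) hu0
      (le_of_lt (lt_of_lt_of_le h1 (min_le_left _ _)))
      hv0 (le_of_lt (lt_of_lt_of_le h2 (min_le_right _ _))) (hEq y hy)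
    have e2 := hrb₂ (Real.exp (-X₂)) (Real.exp (-X₁)) hv0
      (le_of_lt (lt_of_lt_of_le h2 (min_le_left _ _)))
      hu0 (le_of_lt (lt_of_lt_of_le h1 (min_le_right _ _))) (hEq y hy).symm
    have l1 : X₂ - X₁ ≤ Real.log K₁ := by
      refine (Real.le_log_iff_exp_le hK₁).mpr ?_
      have : Real.exp (X₂ - X₁) = Real.exp (-X₁) * Real.exp X₂ := by
        rw [← Real.exp_add]; ring_nf
      rw [this]
      calc Real.exp (-X₁) * Real.exp X₂ ≤ (K₁ * Real.exp (-X₂)) * Real.exp X₂ :=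
            mul_le_mul_of_nonneg_right e1 (Real.exp_pos _).le
        _ = K₁ := by rw [mul_assoc, ← Real.exp_add]; simp
    have l2 : X₁ - X₂ ≤ Real.log K₂ := by
      refine (Real.le_log_iff_exp_le hK₂).mpr ?_
      have : Real.exp (X₁ - X₂) = Real.exp (-X₂) * Real.exp X₁ := by
        rw [← Real.exp_add]; ring_nf
      rw [this]
      calc Real.exp (-X₂) * Real.exp X₁ ≤ (K₂ * Real.exp (-X₁)) * Real.exp X₁ :=
            mul_le_mul_of_nonneg_right e2 (Real.exp_pos _).le
        _ = K₂ := by rw [mul_assoc, ← Real.exp_add]; simp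
    have hX₁e : X₁ = c₁ * y ^ α₁ := by
      rw [hX₁, Real.div_rpow hy.le hlam₁.le, hc₁def]; ring
    have hX₂e : X₂ = c₂ * y ^ α₂ := by
      rw [hX₂, Real.div_rpow hy.le hlam₂.le, hc₂def]; ring
    rw [← hX₁e, ← hX₂e, abs_le]
    constructor
    · have := l2
      have h3 : -(Real.log K₂) ≤ X₂ - X₁ := by linarith
      exact le_trans (neg_le_neg (le_max_right (Real.log K₁) (Real.log K₂))) h3
    · exact le_trans l1 (le_max_left _ _)
  obtain ⟨hαeq, hceq⟩ := growth c₁ c₂ α₁ α₂ _ hc₁0 hc₂0 hα₁ hα₂ hbound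
  have hlameq : lam₁ = lam₂ := by
    have h4 : lam₁ ^ α₁ = lam₂ ^ α₂ := by
      have := congrArg (fun z : ℝ => z⁻¹) hceq
      simpa [hc₁def, hc₂def] using hceq
    rw [← hαeq] at h4
    have := congrArg (fun z : ℝ => z ^ α₁⁻¹) h4
    simpa [← Real.rpow_mul hlam₁.le, ← Real.rpow_mul hlam₂.le,
      mul_inv_cancel₀ (ne_of_gt hα₁)] using this
  subst hαeq
  subst hlameq
  refine ⟨rfl, rfl, ?_⟩
  -- Step 3: the power series identity on (0,1)
  have h0 : ∀ t : ℝ, 0 < t → t < 1 →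
      (∑' k : ℕ, a (k+1) * (θ₁ * t) ^ (k+1)) * C₂
        = (∑' k : ℕ, a (k+1) * (θ₂ * t) ^ (k+1)) * C₁ := by
    intro t ht ht1
    have hlogt : 0 < -Real.log t := neg_pos.mpr (Real.log_neg ht ht1)
    set w : ℝ := (-Real.log t) ^ α₁⁻¹ with hwdef
    have hw : 0 < w := Real.rpow_pos_of_pos hlogt _
    have hy : 0 < lam₁ * w := by positivity
    have harg : ((lam₁ * w) / lam₁) ^ α₁ = -Real.log t := by
      rw [mul_div_cancel_left₀ _ (ne_of_gt hlam₁), hwdef, ← Real.rpow_mul hlogt.le,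
        inv_mul_cancel₀ (ne_of_gt hα₁), Real.rpow_one]
    have h5 := hEq (lam₁ * w) hy
    rw [harg, neg_neg, Real.exp_log ht] at h5
    exact h5
  set d : ℕ → ℝ := fun k => a (k+1) * θ₁ ^ (k+1) * C₂ - a (k+1) * θ₂ ^ (k+1) * C₁
    with hddef
  have hs₁ : Summable (fun k : ℕ => a (k+1) * |θ₁| ^ (k+1) * |C₂|) :=
    (abs_summable' a s ha hsum θ₁ hθ₁s).mul_right _
  have hs₂ : Summable (fun k : ℕ => a (k+1) * |θ₂| ^ (k+1) * |C₁|) :=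
    (abs_summable' a s ha hsum θ₂ hθ₂s).mul_right _
  have hdsum : Summable (fun k => |d k|) := by
    refine (hs₁.add hs₂).of_nonneg_of_le (fun k => abs_nonneg _) (fun k => ?_)
    rw [hddef]
    refine (abs_sub _ _).trans ?_
    rw [abs_mul, abs_mul, abs_mul, abs_mul, abs_pow, abs_pow,
      abs_of_nonneg (ha (k+1) (by omega))]
  have hvan : ∀ t : ℝ, 0 < t → t < 1 → (∑' k, d k * t ^ k) = 0 := by
    intro t ht ht1
    have h0t := h0 t ht ht1
    have hg₁ : Summable (fun k : ℕ => a (k+1) * θ₁ ^ (k+1) * C₂ * t ^ (k+1)) := by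
      refine summable_abs_iff.mp (hs₁.of_nonneg_of_le (fun k => abs_nonneg _)
        (fun k => ?_))
      rw [abs_mul, abs_mul, abs_mul, abs_pow, abs_pow,
        abs_of_nonneg (ha (k+1) (by omega))]
      calc a (k+1) * |θ₁| ^ (k+1) * |C₂| * |t| ^ (k+1)
          ≤ a (k+1) * |θ₁| ^ (k+1) * |C₂| * 1 := by
            refine mul_le_mul_of_nonneg_left ?_
              (mul_nonneg (mul_nonneg (ha _ (by omega)) (by positivity)) (abs_nonneg _))
            exact pow_le_one₀ (abs_nonneg t) (by rw [abs_of_pos ht]; linarith)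
        _ = a (k+1) * |θ₁| ^ (k+1) * |C₂| := mul_one _
    have hg₂ : Summable (fun k : ℕ => a (k+1) * θ₂ ^ (k+1) * C₁ * t ^ (k+1)) := by
      refine summable_abs_iff.mp (hs₂.of_nonneg_of_le (fun k => abs_nonneg _)
        (fun k => ?_))
      rw [abs_mul, abs_mul, abs_mul, abs_pow, abs_pow,
        abs_of_nonneg (ha (k+1) (by omega))]
      calc a (k+1) * |θ₂| ^ (k+1) * |C₁| * |t| ^ (k+1)
          ≤ a (k+1) * |θ₂| ^ (k+1) * |C₁| * 1 := by
            refine mul_le_mul_of_nonneg_left ?_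
              (mul_nonneg (mul_nonneg (ha _ (by omega)) (by positivity)) (abs_nonneg _))
            exact pow_le_one₀ (abs_nonneg t) (by rw [abs_of_pos ht]; linarith)
        _ = a (k+1) * |θ₂| ^ (k+1) * |C₁| := mul_one _
    have e₁ : (∑' k : ℕ, a (k+1) * (θ₁ * t) ^ (k+1)) * C₂
        = ∑' k : ℕ, a (k+1) * θ₁ ^ (k+1) * C₂ * t ^ (k+1) := by
      rw [← tsum_mul_right]
      exact tsum_congr (fun k => by rw [mul_pow]; ring)
    have e₂ : (∑' k : ℕ, a (k+1) * (θ₂ * t) ^ (k+1)) * C₁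
        = ∑' k : ℕ, a (k+1) * θ₂ ^ (k+1) * C₁ * t ^ (k+1) := by
      rw [← tsum_mul_right]
      exact tsum_congr (fun k => by rw [mul_pow]; ring)
    rw [e₁, e₂] at h0t
    have e₃ : (∑' k, d k * t ^ k) * t
        = (∑' k : ℕ, a (k+1) * θ₁ ^ (k+1) * C₂ * t ^ (k+1))
          - (∑' k : ℕ, a (k+1) * θ₂ ^ (k+1) * C₁ * t ^ (k+1)) := by
      rw [← Summable.tsum_sub hg₁ hg₂, ← tsum_mul_right]
      exact tsum_congr (fun k => by rw [hddef]; ring)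
    have h6 : (∑' k, d k * t ^ k) * t = 0 := by rw [e₃, h0t, sub_self]
    rcases mul_eq_zero.mp h6 with h7 | h7
    · exact h7
    · exact absurd h7 (ne_of_gt ht)
  have hdzero : ∀ k, d k = 0 := fun k => tsum_vanish k d hdsum hvan
  -- Step 4: extract the coefficient identities
  have hcoeff : ∀ j : ℕ, 1 ≤ j → 0 < a j → θ₁ ^ j * C₂ = θ₂ ^ j * C₁ := by
    intro j hj haj
    obtain ⟨j', rfl⟩ : ∃ j', j = j' + 1 := ⟨j - 1, by omega⟩
    have h8 := hdzero j'
    rw [hddef] at h8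
    have h9 : a (j'+1) * (θ₁ ^ (j'+1) * C₂) = a (j'+1) * (θ₂ ^ (j'+1) * C₁) := by
      linear_combination h8
    exact mul_left_cancel₀ (ne_of_gt haj) h9
  have hn' := hcoeff n hn1 han
  have hm' := hcoeff m hm1 ham
  have hcross : θ₁ ^ n * θ₂ ^ m = θ₁ ^ m * θ₂ ^ n := by
    have h10 : (θ₁ ^ n * θ₂ ^ m) * C₂ = (θ₁ ^ m * θ₂ ^ n) * C₂ := by
      linear_combination θ₂ ^ m * hn' - θ₂ ^ n * hm'
    exact mul_right_cancel₀ hC₂ h10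
  have hnm : n ≠ m := by
    rintro rfl
    rw [Nat.even_iff] at hnev
    rw [Nat.odd_iff] at hmod
    omega
  rcases lt_or_gt_of_ne hnm with hlt | hgt
  · -- n < m, k = m - n odd
    have hodd : Odd (m - n) := Nat.Odd.sub_even hlt.le hmod hnev
    have e : θ₂ ^ m = θ₂ ^ n * θ₂ ^ (m - n) := by
      rw [← pow_add]; congr 1; omega
    have e' : θ₁ ^ m = θ₁ ^ n * θ₁ ^ (m - n) := by
      rw [← pow_add]; congr 1; omega
    rw [e, e'] at hcross
    have hne0 : θ₁ ^ n * θ₂ ^ n ≠ 0 :=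
      mul_ne_zero (pow_ne_zero _ hθ₁) (pow_ne_zero _ hθ₂)
    have h11 : (θ₁ ^ n * θ₂ ^ n) * θ₂ ^ (m - n) = (θ₁ ^ n * θ₂ ^ n) * θ₁ ^ (m - n) := by
      linear_combination hcross
    have h12 : θ₂ ^ (m - n) = θ₁ ^ (m - n) := mul_left_cancel₀ hne0 h11
    exact (hodd.strictMono_pow (R := ℝ)).injective h12.symm
  · -- m < n, k = n - m odd
    have hodd : Odd (n - m) := Nat.Even.sub_odd hgt.le hnev hmod
    have e : θ₂ ^ n = θ₂ ^ m * θ₂ ^ (n - m) := by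
      rw [← pow_add]; congr 1; omega
    have e' : θ₁ ^ n = θ₁ ^ m * θ₁ ^ (n - m) := by
      rw [← pow_add]; congr 1; omega
    rw [e, e'] at hcross
    have hne0 : θ₁ ^ m * θ₂ ^ m ≠ 0 :=
      mul_ne_zero (pow_ne_zero _ hθ₁) (pow_ne_zero _ hθ₂)
    have h11 : (θ₁ ^ m * θ₂ ^ m) * θ₁ ^ (n - m) = (θ₁ ^ m * θ₂ ^ m) * θ₂ ^ (n - m) := by
      linear_combination hcross
    have h12 : θ₁ ^ (n - m) = θ₂ ^ (n - m) := mul_left_cancel₀ hne0 h11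
    exact (hodd.strictMono_pow (R := ℝ)).injective h12
end

section
/- Fix λ, α > 0 and 0 < θ₁ < θ₂ < s. Then for all y > 0, the survival functions satisfy C(θ₂ e^{-(y/λ)^α})/C(θ₂) ≤ C(θ₁ e^{-(y/λ)^α})/C(θ₁); i.e., the EWPS distributions are stochastically ordered: Y_{θ₂} ≤_st Y_{θ₁}. -/
private lemma ewps_core {b x z : ℝ} (hb0 : 0 < b) (hb1 : b < 1)
    (hx : 0 < x) (hxz : x < z) (M N : ℕ) :
    b ^ M * z ^ M * x ^ N + b ^ N * z ^ N * x ^ M ≤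
      b ^ M * x ^ M * z ^ N + b ^ N * x ^ N * z ^ M := by
  have hz : 0 < z := hx.trans hxz
  rcases le_total M N with hMN | hMN
  · obtain ⟨k, rfl⟩ := Nat.exists_eq_add_of_le hMN
    have h1 : b ^ (M + k) ≤ b ^ M :=
      pow_le_pow_of_le_one hb0.le hb1.le (Nat.le_add_right _ _)
    have h2 : z ^ M * x ^ (M + k) ≤ x ^ M * z ^ (M + k) := by
      rw [pow_add, pow_add]
      have hk : x ^ k ≤ z ^ k := pow_le_pow_left₀ hx.le hxz.le k
      calc z ^ M * (x ^ M * x ^ k) = (x ^ M * z ^ M) * x ^ k := by ring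
        _ ≤ (x ^ M * z ^ M) * z ^ k := by
            apply mul_le_mul_of_nonneg_left hk
            positivity
        _ = x ^ M * (z ^ M * z ^ k) := by ring
    nlinarith [mul_nonneg (sub_nonneg.2 h1) (sub_nonneg.2 h2)]
  · obtain ⟨k, rfl⟩ := Nat.exists_eq_add_of_le hMN
    have h1 : b ^ (N + k) ≤ b ^ N :=
      pow_le_pow_of_le_one hb0.le hb1.le (Nat.le_add_right _ _)
    have h2 : z ^ N * x ^ (N + k) ≤ x ^ N * z ^ (N + k) := by
      rw [pow_add, pow_add]
      have hk : x ^ k ≤ z ^ k := pow_le_pow_left₀ hx.le hxz.le k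
      calc z ^ N * (x ^ N * x ^ k) = (x ^ N * z ^ N) * x ^ k := by ring
        _ ≤ (x ^ N * z ^ N) * z ^ k := by
            apply mul_le_mul_of_nonneg_left hk
            positivity
        _ = x ^ N * (z ^ N * z ^ k) := by ring
    nlinarith [mul_nonneg (sub_nonneg.2 h1) (sub_nonneg.2 h2)]

set_option maxHeartbeats 1000000 in
/-- for 0 < θ₁ < θ₂ < s and all y > 0, the EWPS survival functions
satisfy C(θ₂ e^{-(y/λ)^α})/C(θ₂) ≤ C(θ₁ e^{-(y/λ)^α})/C(θ₁), i.e. Y_{θ₂} ≤_st Y_{θ₁}. -/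
theorem stmt_16 (a : ℕ → ℝ) (s : ℝ) (hs : 0 < s)
    (ha : ∀ n, 1 ≤ n → 0 ≤ a n) (ha1 : 0 < a 1)
    (hsum : ∀ x : ℝ, |x| < s → Summable (fun n : ℕ => a (n+1) * x ^ (n+1)))
    (lam α θ₁ θ₂ : ℝ) (hlam : 0 < lam) (hα : 0 < α)
    (hθ₁ : 0 < θ₁) (h12 : θ₁ < θ₂) (hθ₂s : θ₂ < s) :
    ∀ y : ℝ, 0 < y →
      (∑' n : ℕ, a (n+1) * (θ₂ * Real.exp (-(y / lam) ^ α)) ^ (n+1)) /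
          (∑' n : ℕ, a (n+1) * θ₂ ^ (n+1)) ≤
        (∑' n : ℕ, a (n+1) * (θ₁ * Real.exp (-(y / lam) ^ α)) ^ (n+1)) /
          (∑' n : ℕ, a (n+1) * θ₁ ^ (n+1)) := by
  intro y hy
  set b : ℝ := Real.exp (-(y / lam) ^ α) with hb
  have hb0 : 0 < b := Real.exp_pos _
  have hb1 : b < 1 := by
    rw [hb, Real.exp_lt_one_iff]
    have : 0 < (y / lam) ^ α := Real.rpow_pos_of_pos (div_pos hy hlam) α
    linarith
  have hθ₂ : 0 < θ₂ := hθ₁.trans h12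
  -- summability helper
  have hS : ∀ x : ℝ, 0 < x → x < s → Summable (fun n : ℕ => a (n+1) * x ^ (n+1)) := by
    intro x hx hxs
    exact hsum x (by rw [abs_of_pos hx]; exact hxs)
  have hθ₁b : θ₁ * b < s := by nlinarith
  have hθ₂b : θ₂ * b < s := by nlinarith
  have S1 := hS θ₁ hθ₁ (lt_trans h12 hθ₂s)
  have S2 := hS θ₂ hθ₂ hθ₂s
  have S1b := hS (θ₁ * b) (mul_pos hθ₁ hb0) hθ₁b
  have S2b := hS (θ₂ * b) (mul_pos hθ₂ hb0) hθ₂b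
  have hnn : ∀ (x : ℝ), 0 < x → ∀ n : ℕ, 0 ≤ a (n+1) * x ^ (n+1) := by
    intro x hx n
    exact mul_nonneg (ha (n+1) (Nat.le_add_left _ _)) (by positivity)
  -- positivity of denominators
  have hpos : ∀ (x : ℝ), 0 < x →
      Summable (fun n : ℕ => a (n+1) * x ^ (n+1)) →
      0 < ∑' n : ℕ, a (n+1) * x ^ (n+1) := by
    intro x hx hSx
    have h0 : 0 < a 1 * x ^ 1 := by simpa using mul_pos ha1 (by positivity : (0:ℝ) < x ^ (0+1))
    calc (0:ℝ) < a (0+1) * x ^ (0+1) := by simpa using h0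
      _ ≤ ∑' n : ℕ, a (n+1) * x ^ (n+1) := Summable.le_tsum hSx 0 (fun i _ => hnn x hx i)
  have D1 := hpos θ₁ hθ₁ S1
  have D2 := hpos θ₂ hθ₂ S2
  rw [div_le_div_iff₀ D2 D1]
  -- key cross inequality via double sums
  set F : ℕ × ℕ → ℝ := fun p => (a (p.1+1) * (θ₂ * b) ^ (p.1+1)) * (a (p.2+1) * θ₁ ^ (p.2+1)) with hF
  set G : ℕ × ℕ → ℝ := fun p => (a (p.1+1) * (θ₁ * b) ^ (p.1+1)) * (a (p.2+1) * θ₂ ^ (p.2+1)) with hG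
  have hFsum : Summable F :=
    Summable.mul_of_nonneg S2b S1 (hnn _ (mul_pos hθ₂ hb0)) (hnn _ hθ₁)
  have hGsum : Summable G :=
    Summable.mul_of_nonneg S1b S2 (hnn _ (mul_pos hθ₁ hb0)) (hnn _ hθ₂)
  have hFeq : (∑' n : ℕ, a (n+1) * (θ₂ * b) ^ (n+1)) * (∑' n : ℕ, a (n+1) * θ₁ ^ (n+1))
      = ∑' p : ℕ × ℕ, F p := Summable.tsum_mul_tsum S2b S1 hFsum
  have hGeq : (∑' n : ℕ, a (n+1) * (θ₁ * b) ^ (n+1)) * (∑' n : ℕ, a (n+1) * θ₂ ^ (n+1))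
      = ∑' p : ℕ × ℕ, G p := Summable.tsum_mul_tsum S1b S2 hGsum
  rw [hFeq, hGeq]
  -- symmetrize
  have hFswapS : Summable (fun p : ℕ × ℕ => F p.swap) := hFsum.prod_symm
  have hGswapS : Summable (fun p : ℕ × ℕ => G p.swap) := hGsum.prod_symm
  have hFswap : ∑' p : ℕ × ℕ, F p.swap = ∑' p : ℕ × ℕ, F p := by
    simpa using (Equiv.prodComm ℕ ℕ).tsum_eq F
  have hGswap : ∑' p : ℕ × ℕ, G p.swap = ∑' p : ℕ × ℕ, G p := by
    simpa using (Equiv.prodComm ℕ ℕ).tsum_eq G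
  have key : ∑' p : ℕ × ℕ, (F p + F p.swap) ≤ ∑' p : ℕ × ℕ, (G p + G p.swap) := by
    apply Summable.tsum_le_tsum _ (hFsum.add hFswapS) (hGsum.add hGswapS)
    rintro ⟨m, n⟩
    simp only [hF, hG, Prod.swap_prod_mk]
    have hc1 : 0 ≤ a (m+1) := ha (m+1) (Nat.le_add_left _ _)
    have hc2 : 0 ≤ a (n+1) := ha (n+1) (Nat.le_add_left _ _)
    have core := ewps_core hb0 hb1 hθ₁ h12 (m+1) (n+1)
    have expand : ∀ (u v : ℝ), (u * v) ^ (m+1) = u ^ (m+1) * v ^ (m+1) := fun u v => mul_pow u v _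
    calc a (m+1) * (θ₂ * b) ^ (m+1) * (a (n+1) * θ₁ ^ (n+1))
          + a (n+1) * (θ₂ * b) ^ (n+1) * (a (m+1) * θ₁ ^ (m+1))
        = (a (m+1) * a (n+1)) *
            (b ^ (m+1) * θ₂ ^ (m+1) * θ₁ ^ (n+1) + b ^ (n+1) * θ₂ ^ (n+1) * θ₁ ^ (m+1)) := by
          rw [mul_pow, mul_pow]; ring
      _ ≤ (a (m+1) * a (n+1)) *
            (b ^ (m+1) * θ₁ ^ (m+1) * θ₂ ^ (n+1) + b ^ (n+1) * θ₁ ^ (n+1) * θ₂ ^ (m+1)) :=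
          mul_le_mul_of_nonneg_left core (mul_nonneg hc1 hc2)
      _ = a (m+1) * (θ₁ * b) ^ (m+1) * (a (n+1) * θ₂ ^ (n+1))
          + a (n+1) * (θ₁ * b) ^ (n+1) * (a (m+1) * θ₂ ^ (m+1)) := by
          rw [mul_pow, mul_pow]; ring
  have hFadd : ∑' p : ℕ × ℕ, (F p + F p.swap) = 2 * ∑' p : ℕ × ℕ, F p := by
    rw [Summable.tsum_add hFsum hFswapS, hFswap]; ring
  have hGadd : ∑' p : ℕ × ℕ, (G p + G p.swap) = 2 * ∑' p : ℕ × ℕ, G p := by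
    rw [Summable.tsum_add hGsum hGswapS, hGswap]; ring
  rw [hFadd, hGadd] at key
  linarith
end

section
/- For each fixed b ∈ (0, 1), the function θ ↦ C(θb)/C(θ) is nonincreasing on (0, s), where C(θ) = Σ_{n=1}^∞ a_n θ^n with a_n ≥ 0, a_1 > 0 and radius of convergence s. -/
lemma key_sign (x y b : ℝ) (hx : 0 ≤ x) (hxy : x ≤ y) (hb : 0 ≤ b) (hb1 : b ≤ 1)
    (m n : ℕ) : 0 ≤ (b ^ m - b ^ n) * (x ^ m * y ^ n - y ^ m * x ^ n) := by
  have hy : 0 ≤ y := hx.trans hxy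
  have main : ∀ m n : ℕ, m ≤ n →
      0 ≤ (b ^ m - b ^ n) * (x ^ m * y ^ n - y ^ m * x ^ n) := by
    intro m n hmn
    obtain ⟨k, rfl⟩ := Nat.exists_eq_add_of_le hmn
    apply mul_nonneg
    · have : b ^ (m + k) ≤ b ^ m := by
        rw [pow_add]
        nlinarith [pow_nonneg hb m, (pow_le_one₀ hb hb1 : b ^ k ≤ 1), pow_nonneg hb k]
      linarith
    · have : y ^ m * x ^ (m + k) ≤ x ^ m * y ^ (m + k) := by
        rw [pow_add, pow_add]
        have h1 : x ^ k ≤ y ^ k := pow_le_pow_left₀ hx hxy k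
        nlinarith [mul_nonneg (mul_nonneg (pow_nonneg hx m) (pow_nonneg hy m))
          (sub_nonneg.mpr h1)]
      linarith
  rcases le_total m n with h | h
  · exact main m n h
  · have := main n m h
    nlinarith [this]

/-- for each fixed b ∈ (0,1), θ ↦ C(θb)/C(θ) is nonincreasing on (0,s). -/
theorem stmt_17 (a : ℕ → ℝ) (s : ℝ) (hs : 0 < s)
    (ha : ∀ n, 1 ≤ n → 0 ≤ a n) (ha1 : 0 < a 1)
    (hsum : ∀ x : ℝ, |x| < s → Summable (fun n : ℕ => a (n+1) * x ^ (n+1))) :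
    ∀ b : ℝ, 0 < b → b < 1 →
      AntitoneOn
        (fun θ : ℝ => (∑' n : ℕ, a (n+1) * (θ * b) ^ (n+1)) /
          (∑' n : ℕ, a (n+1) * θ ^ (n+1)))
        (Set.Ioo 0 s) := by
  intro b hb hb1 x hx y hy hxy
  obtain ⟨hx0, hxs⟩ := hx
  obtain ⟨hy0, hys⟩ := hy
  set f : ℝ → ℕ → ℝ := fun u n => a (n+1) * u ^ (n+1) with hf
  -- summability for any 0 < u < s
  have hS : ∀ u : ℝ, 0 < u → u < s → Summable (f u) := fun u h1 h2 =>
    hsum u (by rw [abs_of_pos h1]; exact h2)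
  have hnn : ∀ u : ℝ, 0 ≤ u → ∀ n, 0 ≤ f u n := fun u hu n =>
    mul_nonneg (ha (n+1) (Nat.le_add_left 1 n)) (pow_nonneg hu _)
  have hpos : ∀ u : ℝ, 0 < u → u < s → 0 < ∑' n, f u n := by
    intro u h1 h2
    refine Summable.tsum_pos (hS u h1 h2) (hnn u h1.le) 0 ?_
    simpa [f] using mul_pos ha1 h1
  have hxb : 0 < x * b := mul_pos hx0 hb
  have hxbs : x * b < s := lt_trans (by nlinarith) hxs
  have hyb : 0 < y * b := mul_pos hy0 hb
  have hybs : y * b < s := lt_trans (by nlinarith) hys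
  simp only
  rw [div_le_div_iff₀ (hpos y hy0 hys) (hpos x hx0 hxs)]
  -- goal : C(yb) * C(x) ≤ C(xb) * C(y)
  have hnorm : ∀ u : ℝ, 0 < u → u < s → Summable (fun n => ‖f u n‖) := by
    intro u h1 h2
    refine (hS u h1 h2).congr fun n => ?_
    rw [Real.norm_eq_abs, abs_of_nonneg (hnn u h1.le n)]
  have hP1 : Summable (fun p : ℕ × ℕ => f (y*b) p.1 * f x p.2) :=
    summable_mul_of_summable_norm (hnorm _ hyb hybs) (hnorm _ hx0 hxs)
  have hP2 : Summable (fun p : ℕ × ℕ => f (x*b) p.1 * f y p.2) :=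
    summable_mul_of_summable_norm (hnorm _ hxb hxbs) (hnorm _ hy0 hys)
  have e1 : (∑' n, f (y*b) n) * (∑' n, f x n) = ∑' p : ℕ × ℕ, f (y*b) p.1 * f x p.2 :=
    tsum_mul_tsum_of_summable_norm (hnorm _ hyb hybs) (hnorm _ hx0 hxs)
  have e2 : (∑' n, f (x*b) n) * (∑' n, f y n) = ∑' p : ℕ × ℕ, f (x*b) p.1 * f y p.2 :=
    tsum_mul_tsum_of_summable_norm (hnorm _ hxb hxbs) (hnorm _ hy0 hys)
  rw [e1, e2]
  set D : ℕ × ℕ → ℝ := fun p => f (x*b) p.1 * f y p.2 - f (y*b) p.1 * f x p.2 with hD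
  have hDsum : Summable D := hP2.sub hP1
  have hDswap : Summable (fun p : ℕ × ℕ => D (p.2, p.1)) :=
    ((Equiv.prodComm ℕ ℕ).summable_iff).mpr hDsum
  have hswap_eq : ∑' p : ℕ × ℕ, D (p.2, p.1) = ∑' p, D p :=
    (Equiv.prodComm ℕ ℕ).tsum_eq D
  have hkey : ∀ p : ℕ × ℕ, 0 ≤ D p + D (p.2, p.1) := by
    rintro ⟨m, n⟩
    have h := key_sign x y b hx0.le hxy hb.le hb1.le (m+1) (n+1)
    have hmn := mul_nonneg (mul_nonneg (ha (m+1) (Nat.le_add_left 1 m))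
      (ha (n+1) (Nat.le_add_left 1 n))) h
    have : D (m, n) + D ((m, n).2, (m, n).1) =
        a (m+1) * a (n+1) *
          ((b ^ (m+1) - b ^ (n+1)) * (x ^ (m+1) * y ^ (n+1) - y ^ (m+1) * x ^ (n+1))) := by
      simp only [hD, hf, mul_pow]
      ring
    linarith [this ▸ hmn]
  have h2sum : 0 ≤ ∑' p : ℕ × ℕ, (D p + D (p.2, p.1)) :=
    tsum_nonneg hkey
  rw [Summable.tsum_add hDsum hDswap, hswap_eq] at h2sum
  have hDpos : 0 ≤ ∑' p, D p := by linarith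
  have := Summable.tsum_sub hP2 hP1
  simp only [← hD] at this
  linarith [this ▸ hDpos]
end
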